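/- Let H > 0 and b > 0 be real numbers and let F : [0, b] → ℝ be twice continuously differentiable with F''(x) ≤ H for all x ∈ [0, b]. If 0 < F'(b) ≤ 2·H·b, then F(b) − inf_{x ∈ [0,b]} F(x) ≥ F'(b)²/(4H). -/

import Mathlib

/-- If `F` is twice continuously differentiable on `[0,b]` with `F'' ≤ H`
(`H > 0`), and `0 < F'(b) ≤ 2·H·b`, then `F(b) − inf_{[0,b]} F ≥ F'(b)²/(4H)`. -/
theorem dip_from_endpoint_slope
    (H b : ℝ) (hH : 0 < H) (hb : 0 < b) (F F' F'' : ℝ → ℝ)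
    (hF : ∀ x ∈ Set.Icc (0:ℝ) b, HasDerivWithinAt F (F' x) (Set.Icc 0 b) x)
    (hF' : ∀ x ∈ Set.Icc (0:ℝ) b, HasDerivWithinAt F' (F'' x) (Set.Icc 0 b) x)
    (hF''cont : ContinuousOn F'' (Set.Icc 0 b))
    (hbd : ∀ x ∈ Set.Icc (0:ℝ) b, F'' x ≤ H)
    (h1 : 0 < F' b) (h2 : F' b ≤ 2 * H * b) :
    (F' b) ^ 2 / (4 * H) ≤ F b - sInf (F '' Set.Icc (0:ℝ) b) := by
  have hicc : Convex ℝ (Set.Icc (0:ℝ) b) := convex_Icc 0 b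
  have hFc : ContinuousOn F (Set.Icc 0 b) := fun x hx => (hF x hx).continuousWithinAt
  have hF'c : ContinuousOn F' (Set.Icc 0 b) := fun x hx => (hF' x hx).continuousWithinAt
  have hint : interior (Set.Icc (0:ℝ) b) = Set.Ioo 0 b := interior_Icc
  have hFd : ∀ x ∈ Set.Ioo (0:ℝ) b, HasDerivAt F (F' x) x := fun x hx =>
    (hF x (Set.Ioo_subset_Icc_self hx)).hasDerivAt (Icc_mem_nhds hx.1 hx.2)
  have hF'd : ∀ x ∈ Set.Ioo (0:ℝ) b, HasDerivAt F' (F'' x) x := fun x hx =>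
    (hF' x (Set.Ioo_subset_Icc_self hx)).hasDerivAt (Icc_mem_nhds hx.1 hx.2)
  -- Step A : F' b - F' x ≤ H * (b - x)
  have stepA : ∀ x ∈ Set.Icc (0:ℝ) b, F' b - F' x ≤ H * (b - x) := by
    intro x hx
    have hφd : ∀ y ∈ Set.Ioo (0:ℝ) b,
        HasDerivAt (fun y => H * y - F' y) (H - F'' y) y := by
      intro y hy
      have : HasDerivAt (fun y : ℝ => H * y) H y := by
        simpa using (hasDerivAt_id y).const_mul H
      exact this.sub (hF'd y hy)
    have hmono : MonotoneOn (fun y => H * y - F' y) (Set.Icc 0 b) := by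
      apply monotoneOn_of_deriv_nonneg hicc
      · exact (continuousOn_const.mul continuousOn_id).sub hF'c
      · intro y hy; rw [hint] at hy
        exact (hφd y hy).differentiableAt.differentiableWithinAt
      · intro y hy; rw [hint] at hy
        rw [(hφd y hy).deriv]
        have := hbd y (Set.Ioo_subset_Icc_self hy)
        linarith
    have := hmono hx (Set.right_mem_Icc.2 hb.le) hx.2
    simp only [] at this
    linarith
  -- Step B : g is monotone
  set g := fun x => F x - F' b * x - H * (b - x) ^ 2 / 2 with hgdef
  have hgd : ∀ x ∈ Set.Ioo (0:ℝ) b,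
      HasDerivAt g (F' x - F' b + H * (b - x)) x := by
    intro x hx
    have hA : HasDerivAt (fun x : ℝ => F' b * x) (F' b) x := by
      simpa using (hasDerivAt_id x).const_mul (F' b)
    have hB : HasDerivAt (fun x : ℝ => H * (b - x) ^ 2 / 2) (-(H * (b - x))) x := by
      have h0 : HasDerivAt (fun x : ℝ => b - x) (-1) x := by
        simpa using (hasDerivAt_id' x).const_sub b
      have h1 : HasDerivAt (fun x : ℝ => (b - x) ^ 2) (2 * (b - x) * (-1)) x := by
        simpa using h0.fun_pow 2
      have := (h1.const_mul H).div_const 2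
      exact this.congr_deriv (by ring)
    have := ((hFd x hx).sub hA).sub hB
    exact this.congr_deriv (by ring)
  have hgmono : MonotoneOn g (Set.Icc 0 b) := by
    apply monotoneOn_of_deriv_nonneg hicc
    · exact (hFc.sub (continuousOn_const.mul continuousOn_id)).sub
        ((continuousOn_const.mul ((continuousOn_const.sub continuousOn_id).pow 2)).div_const 2)
    · intro y hy; rw [hint] at hy
      exact (hgd y hy).differentiableAt.differentiableWithinAt
    · intro y hy; rw [hint] at hy
      rw [(hgd y hy).deriv]
      have := stepA y (Set.Ioo_subset_Icc_self hy)
      linarith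
  set δ := F' b / (2 * H) with hδ
  have hδpos : 0 < δ := div_pos h1 (by linarith)
  have hδle : δ ≤ b := by
    rw [hδ, div_le_iff₀ (by linarith : (0:ℝ) < 2 * H)]; linarith
  have hmem' : b - δ ∈ Set.Icc (0:ℝ) b := ⟨by linarith, by linarith⟩
  have key := hgmono hmem' (Set.right_mem_Icc.2 hb.le) (by linarith)
  simp only [hgdef] at key
  have hinf : sInf (F '' Set.Icc 0 b) ≤ F (b - δ) :=
    csInf_le (isCompact_Icc.image_of_continuousOn hFc).bddBelow ⟨b - δ, hmem', rfl⟩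
  have e1 : F' b * δ = F' b ^ 2 / (2 * H) := by
    rw [hδ]; field_simp
  have e2 : H * δ ^ 2 = F' b ^ 2 / (4 * H) := by
    rw [hδ]; field_simp; ring
  have e3 : F' b ^ 2 / (2 * H) = 2 * (F' b ^ 2 / (4 * H)) := by
    field_simp; ring
  have hdip : F' b ^ 2 / (4 * H) ≤ F b - F (b - δ) := by
    have hq : (0:ℝ) < F' b ^ 2 / (4 * H) := by positivity
    have key' : F' b * δ - H * δ ^ 2 / 2 ≤ F b - F (b - δ) := by nlinarith [key]
    linarith [key', e1, e2, e3, hq]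
  linarith
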